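/- For every n ≥ 5, the largest eigenvalue λ = λ1(Γ1) of the signed graph Γ1 of order n is a root of the cubic polynomial x^3 + (5−n)x^2 + (5−2n)x + (n−5), and it satisfies n − 3 < λ < n − 2. -/

import Mathlib

open scoped BigOperators

/-- A signed graph on the vertex set `Fin n`: a simple graph together with a
symmetric `±1` sign on each edge. -/
structure SignedGraph (n : ℕ) where
  G : SimpleGraph (Fin n)
  sign : Fin n → Fin n → ℤ
  sign_symm : ∀ i j, sign i j = sign j i
  sign_pm : ∀ i j, G.Adj i j → sign i j = 1 ∨ sign i j = -1

namespace SignedGraph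

variable {n : ℕ}

open Classical in
/-- The adjacency matrix of a signed graph, as a real matrix. -/
noncomputable def adjMatrix (Γ : SignedGraph n) : Matrix (Fin n) (Fin n) ℝ :=
  fun i j => if Γ.G.Adj i j then (Γ.sign i j : ℝ) else 0

/-- The largest eigenvalue (the index) of a signed graph. -/
noncomputable def lambda1 (Γ : SignedGraph n) : ℝ :=
  sSup (spectrum ℝ Γ.adjMatrix)

/-- The sign of an unordered edge. -/
def signEdge (Γ : SignedGraph n) : Sym2 (Fin n) → ℤ :=
  Sym2.lift ⟨Γ.sign, Γ.sign_symm⟩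

/-- The sign of a walk: the product of the signs of its edges. -/
def walkSign (Γ : SignedGraph n) {u v : Fin n} (w : Γ.G.Walk u v) : ℤ :=
  (w.edges.map Γ.signEdge).prod

/-- A negative cycle: a cycle whose sign is `-1`
(equivalently, with an odd number of negative edges). -/
def IsNegCycle (Γ : SignedGraph n) {u : Fin n} (c : Γ.G.Walk u u) : Prop :=
  c.IsCycle ∧ Γ.walkSign c = -1

/-- A signed graph is unbalanced if it contains a negative cycle. -/
def Unbalanced (Γ : SignedGraph n) : Prop :=
  ∃ (u : Fin n) (c : Γ.G.Walk u u), Γ.IsNegCycle c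

/-- A signed graph is negative-`C₄`-free if it contains no negative 4-cycle. -/
def NegC4Free (Γ : SignedGraph n) : Prop :=
  ∀ (u : Fin n) (c : Γ.G.Walk u u), c.IsCycle → c.length = 4 → Γ.walkSign c ≠ -1

end SignedGraph

/-- The signed graph `Γ₁`: vertices `2,…,n-1` induce an all-positive complete
graph, vertices `0` and `1` are joined to each other by a negative edge and to
vertex `2` by positive edges, and have no other neighbours. -/
def Gamma1 (n : ℕ) : SignedGraph n where
  G :=
    { Adj := fun i j => i ≠ j ∧ (2 ≤ min i.val j.val ∨ max i.val j.val ≤ 2)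
      symm := by
        constructor
        intro i j h
        refine ⟨Ne.symm h.1, ?_⟩
        rw [min_comm, max_comm]
        exact h.2
      loopless := by constructor; intro i h; exact h.1 rfl }
  sign := fun i j =>
    if (i.val = 0 ∧ j.val = 1) ∨ (i.val = 1 ∧ j.val = 0) then -1 else 1
  sign_symm := by
    intro i j
    by_cases h : (i.val = 0 ∧ j.val = 1) ∨ (i.val = 1 ∧ j.val = 0)
    · rw [if_pos h, if_pos (by tauto)]
    · rw [if_neg h, if_neg (by tauto)]
  sign_pm := by
    intro i j _
    by_cases h : (i.val = 0 ∧ j.val = 1) ∨ (i.val = 1 ∧ j.val = 0)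
    · rw [if_pos h]; right; rfl
    · rw [if_neg h]; left; rfl

/-- The signed graph `Γ₂`: vertices `4,…,n-1` induce an all-positive complete
graph, vertices `2` and `3` are joined by positive edges to all of `4,…,n-1`
(but not to each other), vertices `0` and `1` are joined to each other by a
negative edge and to `2` and `3` by positive edges, and have no other
neighbours. -/
def Gamma2 (n : ℕ) : SignedGraph n where
  G :=
    { Adj := fun i j => i ≠ j ∧
        ((i.val ≤ 1 ∧ j.val ≤ 3) ∨ (j.val ≤ 1 ∧ i.val ≤ 3) ∨
         (2 ≤ i.val ∧ i.val ≤ 3 ∧ 4 ≤ j.val) ∨ (2 ≤ j.val ∧ j.val ≤ 3 ∧ 4 ≤ i.val) ∨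
         (4 ≤ i.val ∧ 4 ≤ j.val))
      symm := by
        constructor
        intro i j h
        exact ⟨Ne.symm h.1, by tauto⟩
      loopless := by constructor; intro i h; exact h.1 rfl }
  sign := fun i j =>
    if (i.val = 0 ∧ j.val = 1) ∨ (i.val = 1 ∧ j.val = 0) then -1 else 1
  sign_symm := by
    intro i j
    by_cases h : (i.val = 0 ∧ j.val = 1) ∨ (i.val = 1 ∧ j.val = 0)
    · rw [if_pos h, if_pos (by tauto)]
    · rw [if_neg h, if_neg (by tauto)]
  sign_pm := by
    intro i j _
    by_cases h : (i.val = 0 ∧ j.val = 1) ∨ (i.val = 1 ∧ j.val = 0)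
    · rw [if_pos h]; right; rfl
    · rw [if_neg h]; left; rfl


/-- The all-negative complete signed graph `(K_n, -)`. -/
def NegKn (n : ℕ) : SignedGraph n where
  G := ⊤
  sign := fun _ _ => -1
  sign_symm := fun _ _ => rfl
  sign_pm := fun _ _ _ => Or.inr rfl

/-- `Γ` is switching equivalent to `Γ'` (up to a relabelling of the vertices):
there is a bijection of the vertices matching the underlying graphs and a
`±1`-valued switching function `s` relating the two sign functions. -/
def SwitchingEquiv {n : ℕ} (Γ Γ' : SignedGraph n) : Prop :=
  ∃ e : Fin n ≃ Fin n, ∃ s : Fin n → ℤ, (∀ i, s i = 1 ∨ s i = -1) ∧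
    (∀ i j, Γ.G.Adj i j ↔ Γ'.G.Adj (e i) (e j)) ∧
    (∀ i j, Γ.G.Adj i j → Γ.sign i j = s i * Γ'.sign (e i) (e j) * s j)

section Gamma1Aux

variable {n : ℕ}

private lemma g1_mem_spec {m : ℕ} (A : Matrix (Fin m) (Fin m) ℝ) (μ : ℝ) (v : Fin m → ℝ)
    (hv : v ≠ 0) (h : A.mulVec v = μ • v) : μ ∈ spectrum ℝ A := by
  rw [spectrum.mem_iff]
  intro hu
  rw [Matrix.isUnit_iff_isUnit_det, isUnit_iff_ne_zero] at hu
  apply hu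
  rw [← Matrix.exists_mulVec_eq_zero_iff]
  refine ⟨v, hv, ?_⟩
  rw [Matrix.sub_mulVec, h, Algebra.algebraMap_eq_smul_one, Matrix.smul_mulVec,
    Matrix.one_mulVec, sub_self]

private lemma g1_spec_eigen {m : ℕ} (A : Matrix (Fin m) (Fin m) ℝ) (μ : ℝ)
    (h : μ ∈ spectrum ℝ A) : ∃ v : Fin m → ℝ, v ≠ 0 ∧ A.mulVec v = μ • v := by
  rw [spectrum.mem_iff] at h
  rw [Matrix.isUnit_iff_isUnit_det, isUnit_iff_ne_zero, not_not,
    ← Matrix.exists_mulVec_eq_zero_iff] at h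
  obtain ⟨v, hv, h⟩ := h
  refine ⟨v, hv, ?_⟩
  rw [Matrix.sub_mulVec, Algebra.algebraMap_eq_smul_one, Matrix.smul_mulVec,
    Matrix.one_mulVec, sub_eq_zero] at h
  exact h.symm

private lemma g1_entry (i j : Fin n) :
    (Gamma1 n).adjMatrix i j =
      if (i ≠ j ∧ (2 ≤ min i.val j.val ∨ max i.val j.val ≤ 2)) then
        (if (i.val = 0 ∧ j.val = 1) ∨ (i.val = 1 ∧ j.val = 0) then (-1:ℝ) else 1)
      else 0 := by
  unfold SignedGraph.adjMatrix Gamma1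
  split_ifs with h1 h2 h3 h3 <;> simp_all

/-- sum of a vector over the clique tail `{3,…,n-1}` -/
private noncomputable def g1S (v : Fin n → ℝ) : ℝ :=
  ∑ j ∈ Finset.univ.filter (fun j : Fin n => 3 ≤ j.val), v j

private lemma g1_low_filter (hn : 5 ≤ n) :
    (Finset.univ.filter (fun j : Fin n => ¬ 3 ≤ j.val)) =
      {⟨0, by omega⟩, ⟨1, by omega⟩, ⟨2, by omega⟩} := by
  ext j
  simp [Fin.ext_iff]
  omega

private lemma g1_card_high (hn : 5 ≤ n) :
    (Finset.univ.filter (fun j : Fin n => 3 ≤ j.val)).card = n - 3 := by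
  have h := Finset.card_filter_add_card_filter_not
    (s := (Finset.univ : Finset (Fin n))) (p := fun j : Fin n => 3 ≤ j.val)
  rw [g1_low_filter hn] at h
  have h3 : ({⟨0, by omega⟩, ⟨1, by omega⟩, ⟨2, by omega⟩} :
      Finset (Fin n)).card = 3 := by
    rw [Finset.card_insert_of_notMem (by simp [Fin.ext_iff]),
      Finset.card_insert_of_notMem (by simp [Fin.ext_iff]), Finset.card_singleton]
  simp only [Finset.card_univ, Fintype.card_fin, h3] at h
  omega

private lemma g1_sum_univ (hn : 5 ≤ n) (v : Fin n → ℝ) :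
    ∑ j, v j = v ⟨0, by omega⟩ + v ⟨1, by omega⟩ + v ⟨2, by omega⟩ + g1S v := by
  have h := Finset.sum_filter_add_sum_filter_not
    (Finset.univ : Finset (Fin n)) (fun j : Fin n => 3 ≤ j.val) v
  rw [g1_low_filter hn] at h
  rw [← h, Finset.sum_insert (by simp [Fin.ext_iff]),
    Finset.sum_insert (by simp [Fin.ext_iff]), Finset.sum_singleton]
  show g1S v + _ = _
  ring

private lemma g1_row0 (hn : 5 ≤ n) (v : Fin n → ℝ) :
    ((Gamma1 n).adjMatrix.mulVec v) ⟨0, by omega⟩ =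
      -(v ⟨1, by omega⟩) + v ⟨2, by omega⟩ := by
  have key : ∀ j : Fin n, (Gamma1 n).adjMatrix ⟨0, by omega⟩ j * v j =
      (if j = (⟨1, by omega⟩ : Fin n) then -(v j) else 0) +
      (if j = (⟨2, by omega⟩ : Fin n) then v j else 0) := by
    intro j
    rw [g1_entry]
    split_ifs with h1 h2 h3 h4 h3 h4 <;> simp_all [Fin.ext_iff] <;> omega
  simp only [Matrix.mulVec, dotProduct, key, Finset.sum_add_distrib,
    Finset.sum_ite_eq', Finset.mem_univ, if_pos]

private lemma g1_row1 (hn : 5 ≤ n) (v : Fin n → ℝ) :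
    ((Gamma1 n).adjMatrix.mulVec v) ⟨1, by omega⟩ =
      -(v ⟨0, by omega⟩) + v ⟨2, by omega⟩ := by
  have key : ∀ j : Fin n, (Gamma1 n).adjMatrix ⟨1, by omega⟩ j * v j =
      (if j = (⟨0, by omega⟩ : Fin n) then -(v j) else 0) +
      (if j = (⟨2, by omega⟩ : Fin n) then v j else 0) := by
    intro j
    rw [g1_entry]
    split_ifs with h1 h2 h3 h4 h3 h4 <;> simp_all [Fin.ext_iff] <;> omega
  simp only [Matrix.mulVec, dotProduct, key, Finset.sum_add_distrib,
    Finset.sum_ite_eq', Finset.mem_univ, if_pos]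

private lemma g1_row2 (hn : 5 ≤ n) (v : Fin n → ℝ) :
    ((Gamma1 n).adjMatrix.mulVec v) ⟨2, by omega⟩ =
      (∑ j, v j) - v ⟨2, by omega⟩ := by
  have key : ∀ j : Fin n, (Gamma1 n).adjMatrix ⟨2, by omega⟩ j * v j =
      v j - (if j = (⟨2, by omega⟩ : Fin n) then v j else 0) := by
    intro j
    rw [g1_entry]
    split_ifs with h1 h2 h3 h4 h3 h4 <;> simp_all [Fin.ext_iff] <;> omega
  simp only [Matrix.mulVec, dotProduct, key, Finset.sum_sub_distrib,
    Finset.sum_ite_eq', Finset.mem_univ, if_pos]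

private lemma g1_rowi (hn : 5 ≤ n) (v : Fin n → ℝ) (i : Fin n) (hi : 3 ≤ i.val) :
    ((Gamma1 n).adjMatrix.mulVec v) i =
      v ⟨2, by omega⟩ + (g1S v - v i) := by
  have key : ∀ j : Fin n, (Gamma1 n).adjMatrix i j * v j =
      (if j = (⟨2, by omega⟩ : Fin n) then v j else 0) +
      ((if 3 ≤ j.val then v j else 0) - (if j = i then v j else 0)) := by
    intro j
    rw [g1_entry]
    split_ifs with h1 h2 h3 h4 h5 h3 h4 h5 <;> simp_all [Fin.ext_iff] <;> omega
  simp only [Matrix.mulVec, dotProduct, key, Finset.sum_add_distrib,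
    Finset.sum_sub_distrib, Finset.sum_ite_eq', Finset.mem_univ, if_pos,
    ← Finset.sum_filter]
  rfl

end Gamma1Aux

theorem lambda1_Gamma1_cubic (n : ℕ) (hn : 5 ≤ n) :
    (Gamma1 n).lambda1 ^ 3 + (5 - (n : ℝ)) * (Gamma1 n).lambda1 ^ 2
        + (5 - 2 * (n : ℝ)) * (Gamma1 n).lambda1 + ((n : ℝ) - 5) = 0 ∧
      (n : ℝ) - 3 < (Gamma1 n).lambda1 ∧ (Gamma1 n).lambda1 < (n : ℝ) - 2 := by
  have hn' : (5:ℝ) ≤ (n:ℝ) := by exact_mod_cast hn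
  set N : ℝ := (n:ℝ) with hNdef
  have hcast : ((n - 3 : ℕ) : ℝ) = N - 3 := by
    push_cast [Nat.cast_sub (by omega : 3 ≤ n)]; ring
  -- step 1: a root μ of the cubic in (N-3, N-2), by IVT
  have hcont : ContinuousOn (fun x : ℝ => x^3 + (5-N)*x^2 + (5-2*N)*x + (N-5))
      (Set.Icc (N-3) (N-2)) := by fun_prop
  have hsub := intermediate_value_Ioo (by linarith : N-3 ≤ N-2) hcont
  have h0mem : (0:ℝ) ∈ Set.Ioo ((N-3)^3 + (5-N)*(N-3)^2 + (5-2*N)*(N-3) + (N-5))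
      ((N-2)^3 + (5-N)*(N-2)^2 + (5-2*N)*(N-2) + (N-5)) := by
    constructor
    · nlinarith
    · nlinarith
  obtain ⟨μ, hμmem, hμ0⟩ := hsub h0mem
  simp only [Set.mem_Ioo] at hμmem
  -- step 2: μ is an eigenvalue, via an explicit eigenvector
  set x : Fin n → ℝ := fun j =>
    if j.val ≤ 1 then (μ - N + 4) else if j.val = 2 then (μ+1)*(μ-N+4) else (μ+1) with hxdef
  have hx0 : x ⟨0, by omega⟩ = μ - N + 4 := by simp [hxdef]
  have hx1 : x ⟨1, by omega⟩ = μ - N + 4 := by simp [hxdef]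
  have hx2 : x ⟨2, by omega⟩ = (μ+1)*(μ-N+4) := by simp [hxdef]
  have hxi : ∀ i : Fin n, 3 ≤ i.val → x i = μ + 1 := by
    intro i hi
    simp only [hxdef]
    rw [if_neg (by omega), if_neg (by omega)]
  have hSx : g1S x = (N - 3) * (μ + 1) := by
    unfold g1S
    rw [Finset.sum_congr rfl (fun j hj => hxi j (by simpa using hj)),
      Finset.sum_const, g1_card_high hn, nsmul_eq_mul, hcast]
  have hμ1 : N - 3 < μ := hμmem.1
  have hxeq : (Gamma1 n).adjMatrix.mulVec x = μ • x := by
    funext i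
    rcases lt_or_ge i.val 3 with h3 | h3
    · interval_cases h : i.val
      · have hi : i = ⟨0, by omega⟩ := Fin.ext h
        rw [hi, g1_row0 hn, Pi.smul_apply, smul_eq_mul, hx0, hx1, hx2]
        ring
      · have hi : i = ⟨1, by omega⟩ := Fin.ext h
        rw [hi, g1_row1 hn, Pi.smul_apply, smul_eq_mul, hx0, hx1, hx2]
        ring
      · have hi : i = ⟨2, by omega⟩ := Fin.ext h
        rw [hi, g1_row2 hn, g1_sum_univ hn, Pi.smul_apply, smul_eq_mul,
          hx0, hx1, hx2, hSx]
        linear_combination -hμ0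
    · rw [g1_rowi hn x i h3, Pi.smul_apply, smul_eq_mul, hx2, hSx, hxi i h3]
      ring
  have hxne : x ≠ 0 := by
    intro h
    have h4 := congrFun h ⟨4, by omega⟩
    rw [hxi ⟨4, by omega⟩ (by norm_num)] at h4
    simp only [Pi.zero_apply] at h4
    nlinarith
  have hμspec : μ ∈ spectrum ℝ (Gamma1 n).adjMatrix := g1_mem_spec _ μ x hxne hxeq
  -- step 3: lambda1 is in the spectrum and ≥ μ
  have hfin : (spectrum ℝ (Gamma1 n).adjMatrix).Finite := Matrix.finite_spectrum _
  have hne : (spectrum ℝ (Gamma1 n).adjMatrix).Nonempty := ⟨μ, hμspec⟩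
  have hLmem : (Gamma1 n).lambda1 ∈ spectrum ℝ (Gamma1 n).adjMatrix :=
    hne.csSup_mem hfin
  have hLμ : μ ≤ (Gamma1 n).lambda1 := le_csSup hfin.bddAbove hμspec
  set L : ℝ := (Gamma1 n).lambda1 with hLdef
  have hLgt : N - 3 < L := lt_of_lt_of_le hμ1 hLμ
  have hL2 : (2:ℝ) ≤ L := by linarith
  -- step 4: lambda1 satisfies the cubic
  obtain ⟨v, hv0, hveq⟩ := g1_spec_eigen _ L hLmem
  have E0 : -(v ⟨1, by omega⟩) + v ⟨2, by omega⟩ = L * v ⟨0, by omega⟩ := by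
    have := congrFun hveq ⟨0, by omega⟩
    rwa [g1_row0 hn, Pi.smul_apply, smul_eq_mul] at this
  have E1 : -(v ⟨0, by omega⟩) + v ⟨2, by omega⟩ = L * v ⟨1, by omega⟩ := by
    have := congrFun hveq ⟨1, by omega⟩
    rwa [g1_row1 hn, Pi.smul_apply, smul_eq_mul] at this
  have E2 : v ⟨0, by omega⟩ + v ⟨1, by omega⟩ + g1S v = L * v ⟨2, by omega⟩ := by
    have := congrFun hveq ⟨2, by omega⟩
    rw [g1_row2 hn, g1_sum_univ hn, Pi.smul_apply, smul_eq_mul] at this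
    linarith
  have Ei : ∀ i : Fin n, 3 ≤ i.val →
      v ⟨2, by omega⟩ + (g1S v - v i) = L * v i := by
    intro i hi
    have := congrFun hveq i
    rwa [g1_rowi hn v i hi, Pi.smul_apply, smul_eq_mul] at this
  have Esum : (N - 3) * (v ⟨2, by omega⟩ + g1S v) - g1S v = L * g1S v := by
    have h1 : ∑ i ∈ Finset.univ.filter (fun j : Fin n => 3 ≤ j.val),
        (v ⟨2, by omega⟩ + (g1S v - v i)) =
        ∑ i ∈ Finset.univ.filter (fun j : Fin n => 3 ≤ j.val), L * v i :=
      Finset.sum_congr rfl (fun i hi => Ei i (by simpa using hi))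
    rw [← Finset.mul_sum] at h1
    simp only [Finset.sum_add_distrib, Finset.sum_sub_distrib, Finset.sum_const,
      g1_card_high hn, nsmul_eq_mul, hcast] at h1
    show _ = L * g1S v
    unfold g1S at h1 ⊢
    linarith [h1]
  -- derive relations
  have h01 : v ⟨0, by omega⟩ = v ⟨1, by omega⟩ := by
    have h : (L - 1) * (v ⟨0, by omega⟩ - v ⟨1, by omega⟩) = 0 := by
      linear_combination E1 - E0
    rcases mul_eq_zero.mp h with h | h
    · linarith
    · linarith
  have hb : v ⟨2, by omega⟩ = (L + 1) * v ⟨0, by omega⟩ := by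
    linear_combination E0 - h01
  have hS : g1S v = (L^2 + L - 2) * v ⟨0, by omega⟩ := by
    linear_combination E2 + L * hb + h01
  have key : v ⟨0, by omega⟩ * (L^3 + (5-N)*L^2 + (5-2*N)*L + (N-5)) = 0 := by
    rw [hb, hS] at Esum
    linear_combination -Esum
  have ha0 : v ⟨0, by omega⟩ ≠ 0 := by
    intro ha
    apply hv0
    funext i
    have hb0 : v ⟨2, by omega⟩ = 0 := by rw [hb, ha, mul_zero]
    have hS0 : g1S v = 0 := by rw [hS, ha, mul_zero]
    simp only [Pi.zero_apply]
    rcases lt_or_ge i.val 3 with h3 | h3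
    · interval_cases h : i.val
      · have hi : i = ⟨0, by omega⟩ := by apply Fin.ext; simpa using h
        rw [hi]; exact ha
      · have hi : i = ⟨1, by omega⟩ := by apply Fin.ext; simpa using h
        rw [hi, ← h01]; exact ha
      · have hi : i = ⟨2, by omega⟩ := by apply Fin.ext; simpa using h
        rw [hi]; exact hb0
    · have := Ei i h3
      rw [hb0, hS0] at this
      have : (L + 1) * v i = 0 := by linarith
      rcases mul_eq_zero.mp this with h | h
      · linarith
      · exact h
  have cubic : L^3 + (5-N)*L^2 + (5-2*N)*L + (N-5) = 0 :=
    (mul_eq_zero.mp key).resolve_left ha0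
  refine ⟨cubic, hLgt, ?_⟩
  by_contra hcon
  push_neg at hcon
  have hq : (0:ℝ) ≤ L^2 + 3*L + (N-1) := by nlinarith
  nlinarith [mul_nonneg (by linarith : (0:ℝ) ≤ L - (N-2)) hq]
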